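/- Let R be a commutative ring, M an R-module admitting a monomorphism α: M → L with L of finite projective dimension, and suppose f: M → F is a preenvelope of M with respect to modules of finite projective dimension. If 0 → A → P → F → 0 is exact with P projective and Ext^1_R(M, A) = 0, then there exists a monomorphism M → P which is a projective preenvelope of M. -/

import Mathlib

open CategoryTheory Opposite

open Limits

open CategoryTheory Opposite

open Limits

theorem exists_monic_projective_preenvelope_aux (R : Type) [CommRing R]
    (M A P F : Type) [AddCommGroup M] [Module R M]
    [AddCommGroup F] [Module R F] [AddCommGroup A] [Module R A] [AddCommGroup P] [Module R P]
    (f : M →ₗ[R] F)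
    (hP : Module.Projective R P)
    (j : A →ₗ[R] P) (q : P →ₗ[R] F)
    (hj : Function.Injective j) (he : Function.Exact j q) (hq : Function.Surjective q)
    (hExt : Subsingleton (((Ext R (ModuleCat R) 1).obj (op (ModuleCat.of R M))).obj
      (ModuleCat.of R A))) :
    ∃ β : M →ₗ[R] P, q.comp β = f := by
  classical
  set MM := ModuleCat.of R M
  set AA := ModuleCat.of R A
  set PP := ModuleCat.of R P
  set FF := ModuleCat.of R F
  let j' : AA ⟶ PP := ModuleCat.ofHom j
  let q' : PP ⟶ FF := ModuleCat.ofHom q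
  let f' : MM ⟶ FF := ModuleCat.ofHom f
  haveI : Projective PP := by
    exact (IsProjective.iff_projective P).mp hP
  haveI : Epi q' := (ModuleCat.epi_iff_surjective _).mpr hq
  haveI : Mono j' := (ModuleCat.mono_iff_injective _).mpr hj
  have hjq : j' ≫ q' = 0 := by
    ext a
    exact he.apply_apply_eq_zero a
  have hSPF : (ShortComplex.mk j' q' hjq).Exact := by
    rw [ShortComplex.moduleCat_exact_iff]
    intro x hx
    exact (he x).mp hx
  obtain ⟨Pr⟩ : Nonempty (ProjectiveResolution MM) := HasProjectiveResolution.out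
  set π0 : Pr.complex.X 0 ⟶ MM := Pr.π.f 0 with hπ0
  have hd10 : Pr.complex.d 1 0 ≫ π0 = 0 := Pr.complex_d_comp_π_f_zero
  let u : Pr.complex.X 0 ⟶ PP := Projective.factorThru (π0 ≫ f') q'
  have hu : u ≫ q' = π0 ≫ f' := Projective.factorThru_comp _ _
  have hdu : (Pr.complex.d 1 0 ≫ u) ≫ q' = 0 := by
    rw [Category.assoc, hu, ← Category.assoc, hd10, zero_comp]
  let v : Pr.complex.X 1 ⟶ AA := hSPF.liftFromProjective (Pr.complex.d 1 0 ≫ u) hdu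
  have hv : v ≫ j' = Pr.complex.d 1 0 ≫ u := hSPF.liftFromProjective_comp _ _
  -- the Hom complex
  set K := Pr.complex.linearYonedaObj R AA with hK
  have hker : Pr.complex.d 2 1 ≫ v = 0 := by
    rw [← cancel_mono j', Category.assoc, hv, zero_comp, ← Category.assoc,
      HomologicalComplex.d_comp_d, zero_comp]
  have hzero : IsZero (K.homology 1) := by
    refine IsZero.of_iso ?_ (Pr.isoExt 1 AA).symm
    exact ModuleCat.isZero_of_subsingleton _
  have hexact : (K.sc' 0 1 2).Exact := by
    rw [← K.exactAt_iff' 0 1 2 (by simp) (by simp),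
      HomologicalComplex.exactAt_iff_isZero_homology]
    exact hzero
  rw [ShortComplex.moduleCat_exact_iff] at hexact
  have hvK : (K.sc' 0 1 2).g (v : (K.sc' 0 1 2).X₂) = 0 := by
    show Pr.complex.d 2 1 ≫ v = 0
    exact hker
  obtain ⟨w, hw⟩ := hexact v hvK
  have hw' : Pr.complex.d 1 0 ≫ (w : Pr.complex.X 0 ⟶ AA) = v := hw
  let u' : Pr.complex.X 0 ⟶ PP := u - w ≫ j'
  have hcomp : Pr.complex.d 1 0 ≫ u' = 0 := by
    simp only [u', Preadditive.comp_sub]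
    exact sub_eq_zero.mpr (((Category.assoc _ _ _).symm.trans ((congrArg (· ≫ j') hw').trans hv)).symm)
  haveI : Epi (ShortComplex.mk _ _ Pr.complex_d_comp_π_f_zero).g := by
    show Epi (Pr.π.f 0)
    infer_instance
  let β' : MM ⟶ PP := Pr.exact₀.desc u' hcomp
  have hβ' : π0 ≫ β' = u' := Pr.exact₀.g_desc u' hcomp
  have hβq : β' ≫ q' = f' := by
    haveI : Epi π0 := (inferInstance : Epi (Pr.π.f 0))
    rw [← cancel_epi π0, ← Category.assoc, hβ']
    simp only [u', Preadditive.sub_comp, Category.assoc, hjq, comp_zero, sub_zero, hu]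
    exact (congrArg (π0 ≫ f' - ·) ((Category.assoc _ _ _).trans ((congrArg (_ ≫ ·) hjq).trans comp_zero))).trans (sub_zero _)
  exact ⟨β'.hom, congrArg ModuleCat.Hom.hom hβq⟩


universe u

/-- Finite projective dimension, via finite projective resolutions. -/
inductive FinProjDim (R : Type) [CommRing R] : ModuleCat.{u} R → Prop
  | projective (P : ModuleCat R) (h : Module.Projective R P) : FinProjDim R P
  | step (K P M : ModuleCat.{u} R) (hP : Module.Projective R P)
      (i : K →ₗ[R] P) (p : P →ₗ[R] M)
      (hi : Function.Injective i) (he : Function.Exact i p)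
      (hp : Function.Surjective p) (hK : FinProjDim R K) : FinProjDim R M

universe uu vv

theorem FinProjDim.up {R : Type} [CommRing R] {X : ModuleCat.{0} R}
    (h : FinProjDim.{0} R X) : FinProjDim.{0} R X := h

/-- If `M` embeds into a module of finite projective dimension, `f : M → F` is a
preenvelope with respect to the class of modules of finite projective dimension,
`0 → A → P → F → 0` is exact with `P` projective and `Ext^1(M, A) = 0`, then there
is a monomorphism `M → P` which is a projective preenvelope of `M`. -/
theorem exists_monic_projective_preenvelope (R : Type) [CommRing R]
    (M L F A P : Type) [AddCommGroup M] [Module R M] [AddCommGroup L] [Module R L]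
    [AddCommGroup F] [Module R F] [AddCommGroup A] [Module R A] [AddCommGroup P] [Module R P]
    (α : M →ₗ[R] L) (hα : Function.Injective α) (hL : FinProjDim R (ModuleCat.of R L))
    (hF : FinProjDim R (ModuleCat.of R F)) (f : M →ₗ[R] F)
    (hpre : ∀ (L' : ModuleCat R), FinProjDim R L' →
      ∀ ψ : M →ₗ[R] L', ∃ g : F →ₗ[R] (L' : Type), g.comp f = ψ)
    (hP : Module.Projective R P)
    (j : A →ₗ[R] P) (q : P →ₗ[R] F)
    (hj : Function.Injective j) (he : Function.Exact j q) (hq : Function.Surjective q)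
    (hExt : Subsingleton (((Ext R (ModuleCat R) 1).obj (op (ModuleCat.of R M))).obj
      (ModuleCat.of R A))) :
    ∃ β : M →ₗ[R] P, Function.Injective β ∧
      ∀ (Q : Type) [AddCommGroup Q] [Module R Q], Module.Projective R Q →
        ∀ g : M →ₗ[R] Q, ∃ h : P →ₗ[R] Q, h.comp β = g := by
  obtain ⟨β, hβ⟩ := exists_monic_projective_preenvelope_aux R M A P F f hP j q hj he hq hExt
  have hqβ : ∀ m, q (β m) = f m := fun m => LinearMap.congr_fun hβ m
  obtain ⟨g, hg⟩ := hpre (ModuleCat.of R L) hL.up α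
  refine ⟨β, ?_, ?_⟩
  · intro x y hxy
    apply hα
    have hgx := LinearMap.congr_fun hg x
    have hgy := LinearMap.congr_fun hg y
    calc α x = g (f x) := hgx.symm
      _ = g (q (β x)) := by rw [hqβ]
      _ = g (q (β y)) := by rw [hxy]
      _ = g (f y) := by rw [hqβ]
      _ = α y := hgy
  · intro Q _ _ hQ g0
    obtain ⟨g', hg'⟩ := hpre (ModuleCat.of R Q) (FinProjDim.projective _ hQ) g0
    refine ⟨g'.comp q, ?_⟩
    ext m
    calc g' (q (β m)) = g' (f m) := by rw [hqβ]
      _ = g0 m := LinearMap.congr_fun hg' m
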